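/- The Motzkin polynomial M(x,y) = x⁴y² + x²y⁴ - 3x²y² + 1 is not a sum of squares of polynomials: there do not exist polynomials q₁, ..., q_r ∈ ℝ[x,y] with M = q₁² + ⋯ + q_r². -/

import Mathlib

open MvPolynomial

namespace MotzkinAux

/-- The monomial exponent (a, b) as a finitely supported function on `Fin 2`. -/
noncomputable def mm (a b : ℕ) : Fin 2 →₀ ℕ := Finsupp.single 0 a + Finsupp.single 1 b

lemma mm_apply0 (a b : ℕ) : mm a b 0 = a := by
  simp [mm, Finsupp.single_apply]

lemma mm_apply1 (a b : ℕ) : mm a b 1 = b := by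
  simp [mm, Finsupp.single_apply]

lemma ext2 {m n : Fin 2 →₀ ℕ} (h0 : m 0 = n 0) (h1 : m 1 = n 1) : m = n := by
  ext x
  fin_cases x
  · exact h0
  · exact h1

lemma mm_inj {a b c d : ℕ} : mm a b = mm c d ↔ a = c ∧ b = d := by
  constructor
  · intro h
    refine ⟨?_, ?_⟩
    · have := DFunLike.congr_fun h 0; simpa [mm_apply0] using this
    · have := DFunLike.congr_fun h 1; simpa [mm_apply1] using this
  · rintro ⟨rfl, rfl⟩; rfl

/-- The Motzkin polynomial written via monomials. -/
noncomputable def M : MvPolynomial (Fin 2) ℝ :=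
  monomial (mm 4 2) 1 + monomial (mm 2 4) 1 - monomial (mm 2 2) 3 + monomial (mm 0 0) 1

lemma M_eq :
    (X 0 : MvPolynomial (Fin 2) ℝ) ^ 4 * (X 1) ^ 2 + (X 0) ^ 2 * (X 1) ^ 4
      - 3 * (X 0) ^ 2 * (X 1) ^ 2 + 1 = M := by
  have h3 : (3 : MvPolynomial (Fin 2) ℝ) = C 3 := (map_ofNat C 3).symm
  have h1 : (1 : MvPolynomial (Fin 2) ℝ) = monomial (mm 0 0) 1 := by
    simp [mm, monomial_zero']
  rw [M, h3, h1]
  simp [X_pow_eq_monomial, monomial_mul, C_mul_monomial, mm]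

lemma coeff_M (n : Fin 2 →₀ ℕ) :
    coeff n M = (if mm 4 2 = n then 1 else 0) + (if mm 2 4 = n then 1 else 0)
      - (if mm 2 2 = n then 3 else 0) + (if mm 0 0 = n then 1 else 0) := by
  simp [M, coeff_monomial]

/-- Extremal-monomial lemma: if `d` is maximal in the support of `q` for the order
given by the linear functional `α·(m 0) + β·(m 1)` with ties broken by `m 0`, then the
coefficient of `d + d` in `q ^ 2` is the square of the coefficient of `d`. -/
lemma coeff_sq (q : MvPolynomial (Fin 2) ℝ) (d : Fin 2 →₀ ℕ) (α β : ℤ) (hβ : β ≠ 0)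
    (hmax : ∀ m ∈ q.support,
      toLex ((α * (m 0 : ℤ) + β * (m 1 : ℤ), (m 0 : ℕ)) : ℤ × ℕ)
        ≤ toLex ((α * (d 0 : ℤ) + β * (d 1 : ℤ), (d 0 : ℕ)) : ℤ × ℕ)) :
    coeff (d + d) (q ^ 2) = coeff d q ^ 2 := by
  rw [sq, coeff_mul]
  have hmem : ((d, d) : _ × _) ∈ Finset.HasAntidiagonal.antidiagonal (d + d) := Finset.HasAntidiagonal.mem_antidiagonal.mpr rfl
  refine (Finset.sum_eq_single_of_mem (d, d) hmem ?_).trans (sq _).symm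
  · intro p hp hne
    by_contra hc
    have hboth := mul_ne_zero_iff.mp hc
    have h1s : p.1 ∈ q.support := mem_support_iff.mpr hboth.1
    have h2s : p.2 ∈ q.support := mem_support_iff.mpr hboth.2
    have hsum : p.1 + p.2 = d + d := Finset.HasAntidiagonal.mem_antidiagonal.mp hp
    have h0 : p.1 0 + p.2 0 = d 0 + d 0 := by
      rw [← Finsupp.add_apply, hsum, Finsupp.add_apply]
    have h1 : p.1 1 + p.2 1 = d 1 + d 1 := by
      rw [← Finsupp.add_apply, hsum, Finsupp.add_apply]
    have hm1 := Prod.Lex.le_iff.mp (hmax p.1 h1s)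
    have hm2 := Prod.Lex.le_iff.mp (hmax p.2 h2s)
    have hL : (α * (p.1 0 : ℤ) + β * (p.1 1 : ℤ)) + (α * (p.2 0 : ℤ) + β * (p.2 1 : ℤ))
        = 2 * (α * (d 0 : ℤ) + β * (d 1 : ℤ)) := by
      have c0 : (p.1 0 : ℤ) + (p.2 0 : ℤ) = 2 * (d 0 : ℤ) := by exact_mod_cast by omega
      have c1 : (p.1 1 : ℤ) + (p.2 1 : ℤ) = 2 * (d 1 : ℤ) := by exact_mod_cast by omega
      linear_combination α * c0 + β * c1
    have hE1 : α * (p.1 0 : ℤ) + β * (p.1 1 : ℤ) = α * (d 0 : ℤ) + β * (d 1 : ℤ) := by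
      rcases hm1 with h | h
      · rcases hm2 with h' | h'
        · simp only [ofLex_toLex] at h h'; linarith
        · have := h'.1; simp only [ofLex_toLex] at h this; linarith
      · exact h.1
    have hE2 : α * (p.2 0 : ℤ) + β * (p.2 1 : ℤ) = α * (d 0 : ℤ) + β * (d 1 : ℤ) := by
      linarith
    have hf1 : p.1 0 ≤ d 0 := by
      rcases hm1 with h | h
      · exact absurd hE1 (ne_of_lt h)
      · exact h.2
    have hf2 : p.2 0 ≤ d 0 := by
      rcases hm2 with h | h
      · exact absurd hE2 (ne_of_lt h)
      · exact h.2
    have hd01 : p.1 0 = d 0 := by omega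
    have hd02 : p.2 0 = d 0 := by omega
    have hd11 : p.1 1 = d 1 := by
      have hcast : (p.1 0 : ℤ) = (d 0 : ℤ) := by exact_mod_cast hd01
      have : β * (p.1 1 : ℤ) = β * (d 1 : ℤ) := by linear_combination hE1 - α * hcast
      exact_mod_cast mul_left_cancel₀ hβ this
    have hd12 : p.2 1 = d 1 := by
      have hcast : (p.2 0 : ℤ) = (d 0 : ℤ) := by exact_mod_cast hd02
      have : β * (p.2 1 : ℤ) = β * (d 1 : ℤ) := by linear_combination hE2 - α * hcast
      exact_mod_cast mul_left_cancel₀ hβ this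
    exact hne (Prod.ext (ext2 hd01 hd11) (ext2 hd02 hd12))

/-- Support bound for the squares decomposing `M`, from the linear functional
`(a, b) ↦ α a + β b`. -/
lemma support_bound {r : ℕ} (q : Fin r → MvPolynomial (Fin 2) ℝ)
    (hM : M = ∑ i, q i ^ 2) (α β B : ℤ) (hβ : β ≠ 0) (h0 : 0 ≤ B)
    (hu : 2 * α + β ≤ B) (hv : α + 2 * β ≤ B) (he : α + β ≤ B) :
    ∀ i, ∀ m ∈ (q i).support, α * (m 0 : ℤ) + β * (m 1 : ℤ) ≤ B := by
  by_contra hcon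
  push_neg at hcon
  obtain ⟨i₀, m₀, hm₀s, hm₀⟩ := hcon
  set T : Finset (Fin 2 →₀ ℕ) := Finset.univ.biUnion (fun i => (q i).support) with hT
  have hm₀T : m₀ ∈ T := Finset.mem_biUnion.mpr ⟨i₀, Finset.mem_univ _, hm₀s⟩
  obtain ⟨d, hdT, hdmax⟩ := Finset.exists_max_image T
    (fun m => toLex ((α * (m 0 : ℤ) + β * (m 1 : ℤ), (m 0 : ℕ)) : ℤ × ℕ)) ⟨m₀, hm₀T⟩
  have hdB : B < α * (d 0 : ℤ) + β * (d 1 : ℤ) := by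
    have h := Prod.Lex.le_iff.mp (hdmax m₀ hm₀T)
    rcases h with h | h
    · have : α * (m₀ 0 : ℤ) + β * (m₀ 1 : ℤ) < α * (d 0 : ℤ) + β * (d 1 : ℤ) := h
      linarith
    · have : α * (m₀ 0 : ℤ) + β * (m₀ 1 : ℤ) = α * (d 0 : ℤ) + β * (d 1 : ℤ) := h.1
      linarith
  have hcoeff : coeff (d + d) M = ∑ i, coeff d (q i) ^ 2 := by
    rw [hM, coeff_sum]
    refine Finset.sum_congr rfl fun i _ => ?_
    exact coeff_sq (q i) d α β hβ (fun m hm =>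
      hdmax m (Finset.mem_biUnion.mpr ⟨i, Finset.mem_univ _, hm⟩))
  obtain ⟨j, _, hjd⟩ := Finset.mem_biUnion.mp hdT
  have hjne : coeff d (q j) ≠ 0 := mem_support_iff.mp hjd
  have hpos : 0 < ∑ i, coeff d (q i) ^ 2 := by
    apply Finset.sum_pos' (fun i _ => sq_nonneg _)
    exact ⟨j, Finset.mem_univ _, lt_of_le_of_ne (sq_nonneg _) (Ne.symm (pow_ne_zero 2 hjne))⟩
  have hzero : coeff (d + d) M = 0 := by
    rw [coeff_M]
    have k0 : (d + d) 0 = d 0 + d 0 := Finsupp.add_apply _ _ _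
    have k1 : (d + d) 1 = d 1 + d 1 := Finsupp.add_apply _ _ _
    have n1 : mm 4 2 ≠ d + d := by
      intro hcontra
      have a0 := DFunLike.congr_fun hcontra 0
      have a1 := DFunLike.congr_fun hcontra 1
      rw [mm_apply0, k0] at a0; rw [mm_apply1, k1] at a1
      have e0 : d 0 = 2 := by omega
      have e1 : d 1 = 1 := by omega
      rw [e0, e1] at hdB; push_cast at hdB; linarith
    have n2 : mm 2 4 ≠ d + d := by
      intro hcontra
      have a0 := DFunLike.congr_fun hcontra 0
      have a1 := DFunLike.congr_fun hcontra 1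
      rw [mm_apply0, k0] at a0; rw [mm_apply1, k1] at a1
      have e0 : d 0 = 1 := by omega
      have e1 : d 1 = 2 := by omega
      rw [e0, e1] at hdB; push_cast at hdB; linarith
    have n3 : mm 2 2 ≠ d + d := by
      intro hcontra
      have a0 := DFunLike.congr_fun hcontra 0
      have a1 := DFunLike.congr_fun hcontra 1
      rw [mm_apply0, k0] at a0; rw [mm_apply1, k1] at a1
      have e0 : d 0 = 1 := by omega
      have e1 : d 1 = 1 := by omega
      rw [e0, e1] at hdB; push_cast at hdB; linarith
    have n4 : mm 0 0 ≠ d + d := by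
      intro hcontra
      have a0 := DFunLike.congr_fun hcontra 0
      have a1 := DFunLike.congr_fun hcontra 1
      rw [mm_apply0, k0] at a0; rw [mm_apply1, k1] at a1
      have e0 : d 0 = 0 := by omega
      have e1 : d 1 = 0 := by omega
      rw [e0, e1] at hdB; push_cast at hdB; linarith
    simp [n1, n2, n3, n4]
  rw [hzero] at hcoeff
  linarith

end MotzkinAux

open MotzkinAux in
theorem motzkin_not_sos :
    ¬ ∃ (r : ℕ) (q : Fin r → MvPolynomial (Fin 2) ℝ),
      (X 0) ^ 4 * (X 1) ^ 2 + (X 0) ^ 2 * (X 1) ^ 4 - 3 * (X 0) ^ 2 * (X 1) ^ 2 + 1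
        = ∑ i, (q i) ^ 2 := by
  rintro ⟨r, q, h⟩
  rw [M_eq] at h
  have hA := support_bound q h 1 1 3 (by norm_num) (by norm_num) (by norm_num) (by norm_num)
    (by norm_num)
  have hB := support_bound q h 1 (-2) 0 (by norm_num) le_rfl (by norm_num) (by norm_num)
    (by norm_num)
  have hC := support_bound q h (-2) 1 0 (by norm_num) le_rfl (by norm_num) (by norm_num)
    (by norm_num)
  have hleft : coeff (mm 2 2) M = -3 := by
    rw [coeff_M]
    rw [if_neg (by simp [mm_inj]), if_neg (by simp [mm_inj]), if_pos rfl,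
      if_neg (by simp [mm_inj])]
    norm_num
  have hright : coeff (mm 2 2) M = ∑ i, coeff (mm 1 1) (q i) ^ 2 := by
    rw [h, coeff_sum]
    refine Finset.sum_congr rfl fun i _ => ?_
    rw [sq, coeff_mul]
    have hmem : ((mm 1 1, mm 1 1) : _ × _) ∈ Finset.HasAntidiagonal.antidiagonal (mm 2 2) :=
      Finset.HasAntidiagonal.mem_antidiagonal.mpr (ext2
        (by rw [Finsupp.add_apply, mm_apply0, mm_apply0])
        (by rw [Finsupp.add_apply, mm_apply1, mm_apply1]))
    refine (Finset.sum_eq_single_of_mem ((mm 1 1, mm 1 1) : _ × _) hmem ?_).trans (sq _).symm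
    · intro p hp hne
      by_contra hc
      have hboth := mul_ne_zero_iff.mp hc
      have h1s : p.1 ∈ (q i).support := mem_support_iff.mpr hboth.1
      have h2s : p.2 ∈ (q i).support := mem_support_iff.mpr hboth.2
      have hsum : p.1 + p.2 = mm 2 2 := Finset.HasAntidiagonal.mem_antidiagonal.mp hp
      have c0 : p.1 0 + p.2 0 = 2 := by
        have := DFunLike.congr_fun hsum 0
        rw [Finsupp.add_apply, mm_apply0] at this; exact this
      have c1 : p.1 1 + p.2 1 = 2 := by
        have := DFunLike.congr_fun hsum 1
        rw [Finsupp.add_apply, mm_apply1] at this; exact this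
      have bA1 := hA i p.1 h1s; have bA2 := hA i p.2 h2s
      have bB1 := hB i p.1 h1s; have bB2 := hB i p.2 h2s
      have bC1 := hC i p.1 h1s; have bC2 := hC i p.2 h2s
      have hvals : p.1 0 = 1 ∧ p.1 1 = 1 ∧ p.2 0 = 1 ∧ p.2 1 = 1 := by omega
      refine hne (Prod.ext (ext2 ?_ ?_) (ext2 ?_ ?_))
      · rw [hvals.1, mm_apply0]
      · rw [hvals.2.1, mm_apply1]
      · rw [hvals.2.2.1, mm_apply0]
      · rw [hvals.2.2.2, mm_apply1]
      
  have hnn : (0 : ℝ) ≤ ∑ i, coeff (mm 1 1) (q i) ^ 2 :=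
    Finset.sum_nonneg fun i _ => sq_nonneg _
  rw [hleft] at hright
  linarith
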